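/- Let N ≥ 2 be an integer and let F, G ∈ ℚ[t, t⁻¹] be Laurent polynomials with F(1) = G(1) = 0 such that F(ζ_d) = G(ζ_d) for every divisor d ≥ 2 of N and every primitive d-th root of unity ζ_d ∈ ℂ. Then t^N − 1 divides F − G in ℚ[t, t⁻¹]. Furthermore, if F and G are symmetric Laurent polynomials with span(F) ≤ N−1 and span(G) ≤ 2⌊N/2⌋, then F = G in ℚ[t, t⁻¹]. -/

import Mathlib

open LaurentPolynomial

/-- Evaluation of a Laurent polynomial with rational coefficients at a
(nonzero) complex number `z`: `Σ aᵢ zⁱ` over the (finite) support. -/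
noncomputable def LaurentPolynomial.evalAt (z : ℂ) (F : LaurentPolynomial ℚ) : ℂ :=
  Finsupp.sum F.coeff fun n a => (a : ℂ) * z ^ n

/-- A Laurent polynomial `F(t) = a₀ + Σ_{i≥1} aᵢ (tⁱ + t⁻ⁱ)` is symmetric
iff its coefficients satisfy `F i = F (-i)` for all `i : ℤ`. -/
def LaurentPolynomial.IsSymmetric (F : LaurentPolynomial ℚ) : Prop :=
  ∀ i : ℤ, F.coeff i = F.coeff (-i)

/-- `span F ≤ s`: the difference between any two exponents occurring in
`F` (in particular, between the maximal and minimal degrees) is at most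
`s`. -/
def LaurentPolynomial.SpanLE (F : LaurentPolynomial ℚ) (s : ℤ) : Prop :=
  ∀ i j : ℤ, F.coeff i ≠ 0 → F.coeff j ≠ 0 → i - j ≤ s

/-- The evaluation at a nonzero complex number, as an algebra homomorphism. -/
noncomputable def laurentEvalHom (z : ℂ) (hz : z ≠ 0) : LaurentPolynomial ℚ →ₐ[ℚ] ℂ :=
  AddMonoidAlgebra.lift ℚ ℂ ℤ ((Units.coeHom ℂ).comp (zpowersHom ℂˣ (Units.mk0 z hz)))

lemma laurentEvalHom_eq (z : ℂ) (hz : z ≠ 0) (F : LaurentPolynomial ℚ) :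
    LaurentPolynomial.evalAt z F = laurentEvalHom z hz F := by
  rw [LaurentPolynomial.evalAt, laurentEvalHom, AddMonoidAlgebra.lift_apply]
  refine Finsupp.sum_congr fun n _ => ?_
  simp [Algebra.smul_def, Units.val_zpow_eq_zpow_val]

lemma laurentEvalHom_T (z : ℂ) (hz : z ≠ 0) (n : ℤ) :
    laurentEvalHom z hz (T n) = z ^ n := by
  rw [laurentEvalHom, T, AddMonoidAlgebra.lift_single]
  simp [Units.val_zpow_eq_zpow_val]

lemma laurentEvalHom_toLaurent (z : ℂ) (hz : z ≠ 0) (p : Polynomial ℚ) :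
    laurentEvalHom z hz (Polynomial.toLaurent p) =
      Polynomial.eval₂ (algebraMap ℚ ℂ) z p := by
  have h : ((laurentEvalHom z hz : LaurentPolynomial ℚ →+* ℂ).comp
      (Polynomial.toLaurent : Polynomial ℚ →+* LaurentPolynomial ℚ))
      = Polynomial.eval₂RingHom (algebraMap ℚ ℂ) z := by
    apply Polynomial.ringHom_ext
    · intro a
      simp only [RingHom.coe_comp, Function.comp_apply, Polynomial.toLaurent_C,
        Polynomial.coe_eval₂RingHom, Polynomial.eval₂_C]
      have : (LaurentPolynomial.C a : LaurentPolynomial ℚ)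
          = algebraMap ℚ (LaurentPolynomial ℚ) a := rfl
      rw [this]
      exact (laurentEvalHom z hz).commutes a
    · simp only [RingHom.coe_comp, Function.comp_apply, Polynomial.toLaurent_X,
        Polynomial.coe_eval₂RingHom, Polynomial.eval₂_X]
      show laurentEvalHom z hz (T 1) = z
      rw [laurentEvalHom_T, zpow_one]
  exact RingHom.congr_fun h p

/-- Let `N ≥ 2` and let `F, G ∈ ℚ[t,t⁻¹]` with
`F(1) = G(1) = 0` satisfy `F(ζ_d) = G(ζ_d)` for every divisor `d ≥ 2`
of `N` and every primitive `d`-th root of unity `ζ_d ∈ ℂ`.  Then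
`t^N - 1` divides `F - G` in `ℚ[t,t⁻¹]`; and if moreover `F`, `G` are
symmetric with `span F ≤ N - 1` and `span G ≤ 2⌊N/2⌋`, then `F = G`. -/
theorem laurent_euler_lift' (N : ℕ) (hN : 2 ≤ N) (F G : LaurentPolynomial ℚ)
    (hF1 : LaurentPolynomial.evalAt 1 F = 0)
    (hG1 : LaurentPolynomial.evalAt 1 G = 0)
    (heval : ∀ d : ℕ, 2 ≤ d → d ∣ N → ∀ ζ : ℂ, IsPrimitiveRoot ζ d →
      LaurentPolynomial.evalAt ζ F = LaurentPolynomial.evalAt ζ G) :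
    ((T (N : ℤ) - 1) ∣ F - G) ∧
    (F.IsSymmetric → G.IsSymmetric →
      F.SpanLE ((N : ℤ) - 1) → G.SpanLE ((2 * (N / 2) : ℕ) : ℤ) →
      F = G) := by
  have hN0 : N ≠ 0 := by omega
  obtain ⟨n, p, hp⟩ := (F - G).exists_T_pow
  -- every N-th root of unity is a root of `p` (mapped to ℂ)
  have hroot : ∀ ζ : ℂ, ζ ^ N = 1 → (p.map (algebraMap ℚ ℂ)).IsRoot ζ := by
    intro ζ hζ
    have hζ0 : ζ ≠ 0 := by
      rintro rfl; rw [zero_pow hN0] at hζ; exact zero_ne_one hζ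
    have hFG : LaurentPolynomial.evalAt ζ F = LaurentPolynomial.evalAt ζ G := by
      by_cases h1 : ζ = 1
      · rw [h1, hF1, hG1]
      · have hd : orderOf ζ ∣ N := orderOf_dvd_of_pow_eq_one hζ
        have hd0 : orderOf ζ ≠ 0 := fun h => hN0 (zero_dvd_iff.mp (h ▸ hd))
        have hd1 : orderOf ζ ≠ 1 := fun h => h1 (orderOf_eq_one_iff.mp h)
        exact heval _ (by omega) hd ζ (IsPrimitiveRoot.orderOf ζ)
    have h2 : laurentEvalHom ζ hζ0 (F - G) = 0 := by
      rw [map_sub, ← laurentEvalHom_eq, ← laurentEvalHom_eq, hFG, sub_self]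
    have h3 := laurentEvalHom_toLaurent ζ hζ0 p
    rw [hp, map_mul, h2, zero_mul] at h3
    rw [Polynomial.IsRoot, Polynomial.eval_map, ← h3]
  -- divisibility over ℂ
  have hdvdC : (Polynomial.X ^ N - 1 : Polynomial ℂ) ∣ p.map (algebraMap ℚ ℂ) := by
    obtain hζ := Complex.isPrimitiveRoot_exp N hN0
    rw [Polynomial.X_pow_sub_one_eq_prod (by omega) hζ]
    refine Finset.prod_dvd_of_coprime ?_ ?_
    · intro a _ b _ hab
      exact Polynomial.pairwise_coprime_X_sub_C Function.injective_id hab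
    · intro ζ' hζ'
      exact Polynomial.dvd_iff_isRoot.mpr
        (hroot ζ' ((Polynomial.mem_nthRootsFinset (by omega) 1).mp hζ'))
  -- divisibility over ℚ
  have hdvdQ : (Polynomial.X ^ N - 1 : Polynomial ℚ) ∣ p := by
    have hmonic : (Polynomial.X ^ N - 1 : Polynomial ℚ).Monic := by
      simpa using Polynomial.monic_X_pow_sub_C (1 : ℚ) hN0
    rw [← Polynomial.map_dvd_map (algebraMap ℚ ℂ) (algebraMap ℚ ℂ).injective hmonic]
    simpa using hdvdC
  -- lift divisibility to Laurent polynomials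
  have hdvd : (T (N : ℤ) - 1) ∣ F - G := by
    obtain ⟨c, hc⟩ := hdvdQ
    refine ⟨Polynomial.toLaurent c * T (-(n : ℤ)), ?_⟩
    have h2 : Polynomial.toLaurent p
        = (T (N : ℤ) - 1) * Polynomial.toLaurent c := by
      rw [hc, map_mul, map_sub, map_one, Polynomial.toLaurent_X_pow]
    have h3 : (F - G) * T (n : ℤ) * T (-(n : ℤ)) = F - G := by
      rw [mul_assoc, ← T_add, add_neg_cancel, T_zero, mul_one]
    rw [← h3, ← hp, h2, mul_assoc]
  refine ⟨hdvd, fun hFs hGs hFsp hGsp => ?_⟩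
  -- second part
  by_contra hne
  obtain ⟨K, hK⟩ := hdvd
  have hKne : K ≠ 0 := by
    rintro rfl
    rw [mul_zero] at hK
    exact hne (sub_eq_zero.mp hK)
  set M : ℤ := ((N / 2 : ℕ) : ℤ) with hMdef
  have hM1 : 2 * M ≤ (N : ℤ) := by rw [hMdef]; omega
  have hM2 : (N : ℤ) ≤ 2 * M + 1 := by rw [hMdef]; omega
  have hHcoeff : ∀ i : ℤ, (F - G).coeff i = K.coeff (i - (N : ℤ)) - K.coeff i := by
    intro i
    rw [hK, sub_mul, one_mul, AddMonoidAlgebra.coeff_sub, Finsupp.sub_apply]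
    congr 1
    rw [T, AddMonoidAlgebra.coeff_single_mul_apply, one_mul]
    congr 1
    ring
  have hsupp : K.coeff.support.Nonempty := Finsupp.support_nonempty_iff.mpr (fun h => hKne (by ext i; simp [h]))
  set b := K.coeff.support.max' hsupp with hbdef
  set a := K.coeff.support.min' hsupp with hadef
  have hKb : K.coeff b ≠ 0 := Finsupp.mem_support_iff.mp (K.coeff.support.max'_mem hsupp)
  have hKa : K.coeff a ≠ 0 := Finsupp.mem_support_iff.mp (K.coeff.support.min'_mem hsupp)
  have hab : a ≤ b := K.coeff.support.min'_le _ (K.coeff.support.max'_mem hsupp)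
  have hKhigh : ∀ i : ℤ, b < i → K.coeff i = 0 := fun i hi =>
    Finsupp.notMem_support_iff.mp fun h => absurd (K.coeff.support.le_max' _ h) (not_le.mpr hi)
  have hKlow : ∀ i : ℤ, i < a → K.coeff i = 0 := fun i hi =>
    Finsupp.notMem_support_iff.mp fun h => absurd (K.coeff.support.min'_le _ h) (not_le.mpr hi)
  -- support bound for F - G
  have hbd : ∀ i : ℤ, (F - G).coeff i ≠ 0 → -M ≤ i ∧ i ≤ M := by
    intro i hi
    have hFG : F.coeff i ≠ 0 ∨ G.coeff i ≠ 0 := by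
      by_contra h
      push_neg at h
      rw [AddMonoidAlgebra.coeff_sub, Finsupp.sub_apply, h.1, h.2, sub_zero] at hi
      exact hi rfl
    rcases hFG with h | h
    · have h' : F.coeff (-i) ≠ 0 := by rw [← hFs i]; exact h
      have h1 := hFsp i (-i) h h'
      have h2 := hFsp (-i) i h' h
      omega
    · have h' : G.coeff (-i) ≠ 0 := by rw [← hGs i]; exact h
      have h1 := hGsp i (-i) h h'
      have h2 := hGsp (-i) i h' h
      have hcast : ((2 * (N / 2) : ℕ) : ℤ) = 2 * M := by rw [hMdef]; omega
      rw [hcast] at h1 h2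
      omega
  -- the top coefficient of (T^N - 1) * K
  have hb2 : (F - G).coeff ((N : ℤ) + b) ≠ 0 := by
    rw [hHcoeff]
    have e1 : (N : ℤ) + b - N = b := by ring
    rw [e1, hKhigh ((N : ℤ) + b) (by omega), sub_zero]
    exact hKb
  have hbb : (N : ℤ) + b ≤ M := (hbd _ hb2).2
  have ha2 : (F - G).coeff a ≠ 0 := by
    rw [hHcoeff, hKlow (a - N) (by omega), zero_sub, neg_ne_zero]
    exact hKa
  have haa : -M ≤ a := (hbd _ ha2).1
  have ha' : a = -M := by omega
  have hb' : b = -M := by omega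
  have hMpos : 1 ≤ M := by omega
  have hHM : (F - G).coeff M = K.coeff (-M) := by
    rw [hHcoeff, hKhigh M (by omega), sub_zero]
    congr 1
    omega
  have hHM' : (F - G).coeff (-M) = -K.coeff (-M) := by
    rw [hHcoeff, hKlow (-M - N) (by omega), zero_sub]
  have hsym : (F - G).coeff M = (F - G).coeff (-M) := by
    rw [AddMonoidAlgebra.coeff_sub, Finsupp.sub_apply, Finsupp.sub_apply, hFs M, hGs M]
  rw [hHM, hHM'] at hsym
  have hz : K.coeff (-M) = 0 := by linarith
  rw [hb'] at hKb
  exact hKb hz
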